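/- If a finite simplicial complex K admits a discrete Morse matching with exactly one critical cell (necessarily a vertex), then K is collapsible. -/

import Mathlib

open Finset
set_option linter.unusedSectionVars false

variable {V : Type*} [DecidableEq V]


/-- A (finite abstract) simplicial complex, given by its finset of faces:
all faces are nonempty and the collection is closed under nonempty subsets. -/
def IsComplex (S : Finset (Finset V)) : Prop :=
  ∀ F ∈ S, F.Nonempty ∧ ∀ G ⊆ F, G.Nonempty → G ∈ S

/-- `σ` is a free face of `S`: it is properly contained in exactly one face `τ`,
which is moreover a facet. -/
def IsFreePair (S : Finset (Finset V)) (σ τ : Finset V) : Prop :=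
  σ ∈ S ∧ τ ∈ S ∧ σ ⊂ τ ∧ (∀ ρ ∈ S, σ ⊂ ρ → ρ = τ) ∧ ∀ ρ ∈ S, ¬ τ ⊂ ρ

/-- `Collapses S T`: `S` reduces to `T` by a finite sequence of elementary collapses,
each removing a free face together with the unique facet containing it. -/
inductive Collapses : Finset (Finset V) → Finset (Finset V) → Prop
  | refl (S : Finset (Finset V)) : Collapses S S
  | step {S T : Finset (Finset V)} (σ τ : Finset V) :
      IsFreePair S σ τ → Collapses (S \ {σ, τ}) T → Collapses S T

/-- A complex is collapsible if it collapses to a single vertex. -/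
def Collapsible (S : Finset (Finset V)) : Prop :=
  ∃ v : V, Collapses S {({v} : Finset V)}

/-- A discrete Morse matching: an acyclic partial matching on the Hasse diagram
of `S`, pairing faces whose dimensions differ by one. -/
structure MorseMatching (S : Finset (Finset V)) where
  M : Finset (Finset V × Finset V)
  mem_left : ∀ p ∈ M, p.1 ∈ S
  mem_right : ∀ p ∈ M, p.2 ∈ S
  cover : ∀ p ∈ M, p.1 ⊂ p.2 ∧ p.2.card = p.1.card + 1
  matching : ∀ p ∈ M, ∀ q ∈ M, p ≠ q →
    p.1 ≠ q.1 ∧ p.2 ≠ q.2 ∧ p.1 ≠ q.2 ∧ p.2 ≠ q.1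
  /-- The modified Hasse diagram (matched pairs pointing up, unmatched cover
  relations pointing down) has no directed cycle. -/
  acyclic : ∀ σ : Finset V, ¬ Relation.TransGen
      (fun x y => (x, y) ∈ M ∨
        ((y, x) ∉ M ∧ y ⊂ x ∧ x.card = y.card + 1 ∧ x ∈ S ∧ y ∈ S)) σ σ

/-- A face is critical for a matching if it is unmatched. -/
def MorseMatching.Critical {S : Finset (Finset V)} (mm : MorseMatching S)
    (F : Finset V) : Prop :=
  F ∈ S ∧ ∀ p ∈ mm.M, p.1 ≠ F ∧ p.2 ≠ F

open scoped Classical in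
/-- The finset of critical (unmatched) cells of a matching. -/
noncomputable def MorseMatching.criticalCells {S : Finset (Finset V)}
    (mm : MorseMatching S) : Finset (Finset V) :=
  S.filter fun F => ∀ p ∈ mm.M, p.1 ≠ F ∧ p.2 ≠ F

open scoped Classical in
/-- `c_i`: the number of critical `i`-dimensional cells. -/
noncomputable def MorseMatching.critCount {S : Finset (Finset V)}
    (mm : MorseMatching S) (i : ℕ) : ℕ :=
  (mm.criticalCells.filter fun F => F.card = i + 1).card

/-- Pigeonhole: iterating a self-map of a finite set that always moves forward
along `Relation.TransGen R` produces a directed cycle. -/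
lemma cycle_of_fun {α : Type*} (R : α → α → Prop) (X : Finset α)
    (g : α → α) (hg : ∀ x ∈ X, g x ∈ X)
    (hstep : ∀ x ∈ X, Relation.TransGen R x (g x)) (hne : X.Nonempty) :
    ∃ x, Relation.TransGen R x x := by
  obtain ⟨x0, hx0⟩ := hne
  have ho : ∀ n, g^[n] x0 ∈ X := by
    intro n; induction n with
    | zero => simpa
    | succ n ih => rw [Function.iterate_succ_apply']; exact hg _ ih
  have hchain : ∀ i j, i < j → Relation.TransGen R (g^[i] x0) (g^[j] x0) := by
    intro i j
    induction j with
    | zero => omega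
    | succ j ih =>
      intro hij
      rw [Function.iterate_succ_apply']
      rcases Nat.lt_succ_iff_lt_or_eq.mp hij with h | h
      · exact (ih h).trans (hstep _ (ho j))
      · subst h; exact hstep _ (ho i)
  obtain ⟨i, j, hij, heq⟩ : ∃ i j, i ≠ j ∧ g^[i] x0 = g^[j] x0 := by
    obtain ⟨i, j, hij, heq⟩ := Finite.exists_ne_map_eq_of_infinite
      (fun n : ℕ => (⟨g^[n] x0, ho n⟩ : {x // x ∈ X}))
    exact ⟨i, j, hij, by simpa using heq⟩
  rcases hij.lt_or_gt with h | h
  · exact ⟨g^[i] x0, heq ▸ hchain i j h⟩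
  · exact ⟨g^[j] x0, heq ▸ hchain j i h⟩

/-- The modified Hasse diagram relation of a matching. -/
def hasseRel (S : Finset (Finset V)) (M : Finset (Finset V × Finset V)) :
    Finset V → Finset V → Prop :=
  fun x y => (x, y) ∈ M ∨
    ((y, x) ∉ M ∧ y ⊂ x ∧ x.card = y.card + 1 ∧ x ∈ S ∧ y ∈ S)

lemma mem_sdiff_pair {S : Finset (Finset V)} {σ τ F : Finset V} :
    F ∈ S \ {σ, τ} ↔ F ∈ S ∧ F ≠ σ ∧ F ≠ τ := by
  simp [Finset.mem_sdiff, not_or]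

/-- Removing a matched pair from a Morse matching yields a Morse matching on the
smaller complex with the same critical cells. -/
lemma restrict_matching (S : Finset (Finset V)) (mm : MorseMatching S)
    (σ τ : Finset V) (hpM : (σ, τ) ∈ mm.M) :
    ∃ mm' : MorseMatching (S \ {σ, τ}), mm'.criticalCells = mm.criticalCells := by
  classical
  set S' := S \ {σ, τ} with hS'def
  set M' := mm.M.erase (σ, τ) with hM'def
  have hM'sub : M' ⊆ mm.M := Finset.erase_subset _ _
  have hnotστ : ∀ p ∈ M', p.1 ≠ σ ∧ p.2 ≠ τ ∧ p.1 ≠ τ ∧ p.2 ≠ σ := by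
    intro p hp
    have := mm.matching p (hM'sub hp) (σ, τ) hpM (Finset.ne_of_mem_erase hp)
    exact ⟨this.1, this.2.1, this.2.2.1, this.2.2.2⟩
  refine ⟨{ M := M'
            mem_left := fun p hp => mem_sdiff_pair.mpr
              ⟨mm.mem_left p (hM'sub hp), (hnotστ p hp).1, (hnotστ p hp).2.2.1⟩
            mem_right := fun p hp => mem_sdiff_pair.mpr
              ⟨mm.mem_right p (hM'sub hp), (hnotστ p hp).2.2.2, (hnotστ p hp).2.1⟩
            cover := fun p hp => mm.cover p (hM'sub hp)
            matching := fun p hp q hq hpq => mm.matching p (hM'sub hp) q (hM'sub hq) hpq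
            acyclic := ?_ }, ?_⟩
  · intro x hx
    refine mm.acyclic x (Relation.TransGen.mono ?_ _ _ hx)
    intro a b hab
    rcases hab with hab | ⟨hnm, hsub, hcd, haS, hbS⟩
    · exact Or.inl (hM'sub hab)
    · refine Or.inr ⟨?_, hsub, hcd, (mem_sdiff_pair.mp haS).1, (mem_sdiff_pair.mp hbS).1⟩
      intro hmem
      rcases eq_or_ne ((b, a) : Finset V × Finset V) (σ, τ) with heq | hne2
      · exact (mem_sdiff_pair.mp haS).2.2 (congrArg Prod.snd heq)
      · exact hnm (Finset.mem_erase.mpr ⟨hne2, hmem⟩)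
  · ext F
    simp only [MorseMatching.criticalCells, Finset.mem_filter]
    constructor
    · rintro ⟨hFS', hFcrit⟩
      obtain ⟨hFS, hFσ, hFτ⟩ := mem_sdiff_pair.mp hFS'
      refine ⟨hFS, fun p hp => ?_⟩
      rcases eq_or_ne p ((σ, τ) : Finset V × Finset V) with rfl | hne
      · exact ⟨fun hh => hFσ hh.symm, fun hh => hFτ hh.symm⟩
      · exact hFcrit p (Finset.mem_erase.mpr ⟨hne, hp⟩)
    · rintro ⟨hFS, hFcrit⟩
      have hFσ : F ≠ σ := fun hh => (hFcrit _ hpM).1 hh.symm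
      have hFτ : F ≠ τ := fun hh => (hFcrit _ hpM).2 hh.symm
      exact ⟨mem_sdiff_pair.mpr ⟨hFS, hFσ, hFτ⟩, fun p hp => hFcrit p (hM'sub hp)⟩

/-- Collapsing a free pair preserves complex-ness. -/
lemma complex_sdiff_pair (S : Finset (Finset V)) (hS : IsComplex S)
    (σ τ : Finset V) (hfp : IsFreePair S σ τ) : IsComplex (S \ {σ, τ}) := by
  obtain ⟨hσS, hτS, hστ, huniq, hfacet⟩ := hfp
  intro F hF
  obtain ⟨hFS, hFσ, hFτ⟩ := mem_sdiff_pair.mp hF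
  refine ⟨(hS F hFS).1, fun G hG hGne => ?_⟩
  have hGS : G ∈ S := (hS F hFS).2 G hG hGne
  refine mem_sdiff_pair.mpr ⟨hGS, ?_, ?_⟩
  · rintro rfl
    exact hFτ (huniq F hFS (lt_of_le_of_ne hG fun hh => hFσ hh.symm))
  · rintro rfl
    exact hfacet F hFS (lt_of_le_of_ne hG fun hh => hFτ hh.symm)

/-- a complex admitting a discrete Morse matching with exactly one
critical cell is collapsible. -/
theorem stmt8 (S : Finset (Finset V)) (hS : IsComplex S) (mm : MorseMatching S)
    (h : mm.criticalCells.card = 1) :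
    Collapsible S := by
  classical
  suffices H : ∀ n (S : Finset (Finset V)), S.card ≤ n → IsComplex S →
      ∀ mm : MorseMatching S, mm.criticalCells.card = 1 → Collapsible S from
    H S.card S le_rfl hS mm h
  clear h mm hS S
  intro n
  induction n with
  | zero =>
    intro S hcard hS mm h
    have hSe : S = ∅ := Finset.card_eq_zero.mp (Nat.le_zero.mp hcard)
    subst hSe
    simp [MorseMatching.criticalCells] at h
  | succ n ih =>
    intro S hcard hS mm h
    obtain ⟨c, hc⟩ := Finset.card_eq_one.mp h
    have hcmem : c ∈ mm.criticalCells := hc ▸ Finset.mem_singleton_self c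
    simp only [MorseMatching.criticalCells, Finset.mem_filter] at hcmem
    obtain ⟨hcS, hccritM⟩ := hcmem
    have hacyc : ∀ x, ¬ Relation.TransGen (hasseRel S mm.M) x x := mm.acyclic
    by_cases hdim : ∀ F ∈ S, F.card ≤ 1
    · -- all faces are vertices: no pairs, S is a single vertex
      have hM : mm.M = ∅ := by
        by_contra hne
        obtain ⟨p, hp⟩ := Finset.nonempty_iff_ne_empty.mpr hne
        have h3 := (mm.cover p hp).2
        have h4 := Finset.card_pos.mpr (hS p.1 (mm.mem_left p hp)).1
        have h5 := hdim p.2 (mm.mem_right p hp)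
        omega
      have hSc : mm.criticalCells = S := by
        simp [MorseMatching.criticalCells, hM]
      rw [hSc] at h
      obtain ⟨a, ha⟩ := Finset.card_eq_one.mp h
      have haS : a ∈ S := ha ▸ Finset.mem_singleton_self a
      have ha1 : a.card = 1 :=
        le_antisymm (hdim a haS) (Finset.card_pos.mpr (hS a haS).1)
      obtain ⟨v, hv⟩ := Finset.card_eq_one.mp ha1
      refine ⟨v, ?_⟩
      rw [ha, hv]
      exact Collapses.refl _
    · push_neg at hdim
      obtain ⟨F0, hF0S, hF0big⟩ := hdim
      -- Step 1: the unique critical cell is a vertex.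
      have hccard : c.card = 1 := by
        by_contra hc1
        -- then every vertex is matched (necessarily upward to an edge)
        set Vert := S.filter (fun w => w.card = 1) with hVert
        have hVne : Vert.Nonempty := by
          obtain ⟨v, hvF⟩ := (hS F0 hF0S).1
          exact ⟨{v}, Finset.mem_filter.mpr ⟨(hS F0 hF0S).2 {v}
            (Finset.singleton_subset_iff.mpr hvF) (Finset.singleton_nonempty v),
            Finset.card_singleton v⟩⟩
        have hmatch : ∀ w ∈ Vert, ∃ e, (w, e) ∈ mm.M := by
          intro w hw
          obtain ⟨hwS, hw1⟩ := Finset.mem_filter.mp hw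
          by_contra hno
          push_neg at hno
          have hwcrit : w ∈ mm.criticalCells := by
            simp only [MorseMatching.criticalCells, Finset.mem_filter]
            refine ⟨hwS, fun p hp => ?_⟩
            obtain ⟨a, b⟩ := p
            refine ⟨fun h1 => ?_, fun h2 => ?_⟩
            · have h1' : a = w := h1
              subst h1'
              exact hno b hp
            · have h2' : b = w := h2
              have h3 := (mm.cover _ hp).2
              have h4 := Finset.card_pos.mpr (hS a (mm.mem_left _ hp)).1
              simp only at h3 h4
              rw [h2', hw1] at h3
              omega
          rw [hc] at hwcrit
          rw [← Finset.mem_singleton.mp hwcrit, hw1] at hc1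
          exact hc1 rfl
        choose! gE hgE using hmatch
        have key : ∀ w ∈ Vert, (gE w \ w) ∈ Vert ∧
            Relation.TransGen (hasseRel S mm.M) w (gE w \ w) := by
          intro w hw
          obtain ⟨hwS, hw1⟩ := Finset.mem_filter.mp hw
          have hpe := hgE w hw
          have hsub : w ⊂ gE w := (mm.cover _ hpe).1
          have hcard2 : (gE w).card = w.card + 1 := (mm.cover _ hpe).2
          have heS : gE w ∈ S := mm.mem_right _ hpe
          have hgcard : (gE w \ w).card = 1 := by
            rw [Finset.card_sdiff_of_subset hsub.subset, hcard2, hw1]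
          have hgne : (gE w \ w).Nonempty := Finset.card_pos.mp (by rw [hgcard]; norm_num)
          have hgS : gE w \ w ∈ S := (hS _ heS).2 _ Finset.sdiff_subset hgne
          refine ⟨Finset.mem_filter.mpr ⟨hgS, hgcard⟩, ?_⟩
          refine Relation.TransGen.head (Or.inl hpe) (Relation.TransGen.single (Or.inr ?_))
          refine ⟨?_, ?_, by omega, heS, hgS⟩
          · -- (gE w \ w, gE w) ∉ M
            intro hmem
            rcases eq_or_ne ((gE w \ w, gE w) : Finset V × Finset V) (w, gE w) with heq | hne
            · obtain ⟨v, hv⟩ := hgne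
              have h5 : gE w \ w = w := congrArg Prod.fst heq
              have hv2 := hv
              rw [h5] at hv2
              exact (Finset.mem_sdiff.mp hv).2 hv2
            · exact (mm.matching _ hmem _ hpe hne).2.1 rfl
          · exact Finset.sdiff_ssubset hsub.subset (Finset.card_pos.mp (by omega))
        obtain ⟨x, hx⟩ := cycle_of_fun (hasseRel S mm.M) Vert (fun w => gE w \ w)
          (fun w hw => (key w hw).1) (fun w hw => (key w hw).2) hVne
        exact hacyc x hx
      -- Step 2: find a free matched pair among top-dimensional faces.
      obtain ⟨τ0, hτ0S, hτ0max⟩ := Finset.exists_max_image S Finset.card ⟨c, hcS⟩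
      set d := τ0.card with hd
      have hd2 : 2 ≤ d := le_trans hF0big (hτ0max F0 hF0S)
      set T := S.filter (fun F => F.card = d) with hT
      have hTne : T.Nonempty := ⟨τ0, Finset.mem_filter.mpr ⟨hτ0S, rfl⟩⟩
      have hmatchT : ∀ τ ∈ T, ∃ s, (s, τ) ∈ mm.M := by
        intro τ hτ
        obtain ⟨hτS, hτd⟩ := Finset.mem_filter.mp hτ
        by_contra hno
        push_neg at hno
        have hτcrit : τ ∈ mm.criticalCells := by
          simp only [MorseMatching.criticalCells, Finset.mem_filter]
          refine ⟨hτS, fun p hp => ?_⟩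
          obtain ⟨a, b⟩ := p
          refine ⟨fun h1 => ?_, fun h2 => ?_⟩
          · -- a = τ would make b too big
            have h1' : a = τ := h1
            have h3 := (mm.cover _ hp).2
            have h4 := hτ0max b (mm.mem_right _ hp)
            simp only at h3 h4
            rw [h1', hτd] at h3
            omega
          · have h2' : b = τ := h2
            subst h2'
            exact hno a hp
        rw [hc] at hτcrit
        rw [Finset.mem_singleton.mp hτcrit, hccard] at hτd
        omega
      choose! sig hsig using hmatchT
      have hsigcard : ∀ τ ∈ T, (sig τ).card + 1 = d := by
        intro τ hτ
        have := (mm.cover _ (hsig τ hτ)).2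
        have hτd := (Finset.mem_filter.mp hτ).2
        simp only at this
        omega
      by_cases hfree : ∃ τ ∈ T, ∀ ρ ∈ S, sig τ ⊂ ρ → ρ = τ
      · -- collapse the free pair and recurse
        obtain ⟨τ, hτT, hτfree⟩ := hfree
        obtain ⟨hτS, hτd⟩ := Finset.mem_filter.mp hτT
        have hpM := hsig τ hτT
        have hcov := mm.cover _ hpM
        have hσS : sig τ ∈ S := mm.mem_left _ hpM
        have hfp : IsFreePair S (sig τ) τ :=
          ⟨hσS, hτS, hcov.1, hτfree, fun ρ hρ hss => by
            have h1 := hτ0max ρ hρ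
            have h2 := Finset.card_lt_card hss
            omega⟩
        have hστ : sig τ ≠ τ := hcov.1.ne
        have hpair_sub : ({sig τ, τ} : Finset (Finset V)) ⊆ S := by
          intro x hx
          rcases Finset.mem_insert.mp hx with h1 | h1
          · rw [h1]; exact hσS
          · rw [Finset.mem_singleton.mp h1]; exact hτS
        have hcard' : (S \ {sig τ, τ}).card = S.card - 2 := by
          rw [Finset.card_sdiff_of_subset hpair_sub, Finset.card_pair hστ]
        have hSge : 2 ≤ S.card := by
          have := Finset.card_le_card hpair_sub
          rwa [Finset.card_pair hστ] at this
        obtain ⟨mm', hcrit'⟩ := restrict_matching S mm (sig τ) τ hpM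
        obtain ⟨v, hcol⟩ := ih (S \ {sig τ, τ}) (by omega)
          (complex_sdiff_pair S hS (sig τ) τ hfp) mm' (by rw [hcrit']; exact h)
        exact ⟨v, Collapses.step (sig τ) τ hfp hcol⟩
      · -- otherwise every matched top face's partner lies in another top face: cycle
        exfalso
        push_neg at hfree
        choose! g2 hg2 using hfree
        have key : ∀ τ ∈ T, g2 τ ∈ T ∧
            Relation.TransGen (Function.swap (hasseRel S mm.M)) τ (g2 τ) := by
          intro τ hτ
          obtain ⟨hτS, hτd⟩ := Finset.mem_filter.mp hτ
          obtain ⟨hρS, hρsub, hρne⟩ := hg2 τ hτ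
          have hσc := hsigcard τ hτ
          have hρcard : (g2 τ).card = d := by
            have h1 := hτ0max (g2 τ) hρS
            have h2 := Finset.card_lt_card hρsub
            omega
          have hρT : g2 τ ∈ T := Finset.mem_filter.mpr ⟨hρS, hρcard⟩
          refine ⟨hρT, ?_⟩
          have hup : Function.swap (hasseRel S mm.M) τ (sig τ) := Or.inl (hsig τ hτ)
          have hdown : Function.swap (hasseRel S mm.M) (sig τ) (g2 τ) := by
            refine Or.inr ⟨?_, hρsub, by omega, hρS, mm.mem_left _ (hsig τ hτ)⟩
            intro hmem
            rcases eq_or_ne ((sig τ, g2 τ) : Finset V × Finset V) (sig τ, τ) with heq | hne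
            · exact hρne (congrArg Prod.snd heq)
            · exact (mm.matching _ hmem _ (hsig τ hτ) hne).1 rfl
          exact Relation.TransGen.head hup (Relation.TransGen.single hdown)
        obtain ⟨x, hx⟩ := cycle_of_fun (Function.swap (hasseRel S mm.M)) T g2
          (fun τ hτ => (key τ hτ).1) (fun τ hτ => (key τ hτ).2) hTne
        exact hacyc x (Relation.transGen_swap.mp hx)
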